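/- Let c be a standard Coxeter element of S_n with cycle notation (a_1,...,a_m,...,a_n) where 1 = a_1 < ... < a_m = n and a_m > a_{m+1} > ... > a_n > 1; set L_c = {a_2,...,a_{m-1}} and R_c = {a_{m+1},...,a_n}. Let s_k = (k,k+1) be initial in c and c' = s_k c s_k. Then for all 1 < i < j < n, the root (i,j) is c-charmed if and only if either ((i,j) is c'-charmed and |{i,j} ∩ {k,k+1}| is even) or ((i,j) is c'-ordinary and |{i,j} ∩ {k,k+1}| is odd). -/

import Mathlib

/-- The adjacent transposition `sᵢ = (i, i+1)` in the symmetric group on `Fin (n+1)`. -/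
def adjSwap (n : ℕ) (i : Fin n) : Equiv.Perm (Fin (n+1)) :=
  Equiv.swap i.castSucc i.succ

/-- `c` is a standard Coxeter element of `S_{n+1}`. -/
def IsStdCoxeter (n : ℕ) (c : Equiv.Perm (Fin (n+1))) : Prop :=
  ∃ l : List (Fin n), l.Nodup ∧ (∀ i, i ∈ l) ∧ c = (l.map (adjSwap n)).prod

/-- The Coxeter length = number of inversions of a permutation. -/
def invLen {n : ℕ} (w : Equiv.Perm (Fin n)) : ℕ :=
  (Finset.univ.filter fun p : Fin n × Fin n => p.1 < p.2 ∧ w p.2 < w p.1).card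

/-- For a standard Coxeter element `c` with cycle notation increasing to the top and then
decreasing, an interior element `x` lies in `L_c` (the increasing part) iff `x < c x`, and
in `R_c` (the decreasing part) iff `c x < x`.  A root `(i,j)` with `1 < i < j < n` is
`c`-charmed iff one of `i, j` lies in `L_c` and the other in `R_c`. -/
def charmedRel (n : ℕ) (c : Equiv.Perm (Fin (n+1))) (i j : Fin (n+1)) : Prop :=
  (i < c i ∧ c j < j) ∨ (c i < i ∧ j < c j)

set_option maxHeartbeats 1000000
set_option linter.all false

lemma adjSwap_val {n : ℕ} (t : Fin n) (y : Fin (n+1)) :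
    ((adjSwap n t) y).val = if y.val = t.val then t.val + 1
      else if y.val = t.val + 1 then t.val else y.val := by
  unfold adjSwap
  rcases eq_or_ne y t.castSucc with h | h
  · subst h
    rw [Equiv.swap_apply_left]
    simp [Fin.val_succ, Fin.coe_castSucc]
  · rcases eq_or_ne y t.succ with h2 | h2
    · subst h2
      rw [Equiv.swap_apply_right]
      simp only [Fin.coe_castSucc, Fin.val_succ]
      split_ifs <;> omega
    · rw [Equiv.swap_apply_of_ne_of_ne h h2]
      have h1' : y.val ≠ t.val := fun hh => h (Fin.ext (by simpa using hh))
      have h2' : y.val ≠ t.val + 1 := fun hh => h2 (Fin.ext (by simpa using hh))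
      split_ifs <;> omega

lemma prodFix {n : ℕ} (m : List (Fin n)) (x : Fin (n+1))
    (h : ∀ t ∈ m, t.val ≠ x.val ∧ t.val + 1 ≠ x.val) :
    ((m.map (adjSwap n)).prod) x = x := by
  induction m with
  | nil => simp
  | cons t m ih =>
    have ih' := ih (fun t ht => h t (List.mem_cons_of_mem _ ht))
    have ht := h t (List.mem_cons_self)
    simp only [List.map_cons, List.prod_cons, Equiv.Perm.mul_apply, ih']
    apply Fin.ext
    rw [adjSwap_val]
    split_ifs <;> omega

lemma prodCut {n : ℕ} (m : List (Fin n)) (q : Fin n) (h : ∀ t ∈ m, t ≠ q) (y : Fin (n+1)) :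
    (((m.map (adjSwap n)).prod) y).val ≤ q.val ↔ y.val ≤ q.val := by
  induction m with
  | nil => simp
  | cons t m ih =>
    have ih' := ih (fun t ht => h t (List.mem_cons_of_mem _ ht))
    have ht : t.val ≠ q.val := fun hh => h t (List.mem_cons_self) (Fin.ext hh)
    simp only [List.map_cons, List.prod_cons, Equiv.Perm.mul_apply]
    rw [adjSwap_val]
    split_ifs <;> omega

lemma prod_split {n : ℕ} (u v : List (Fin n)) (t : Fin n) (y : Fin (n+1)) :
    (((u ++ t :: v).map (adjSwap n)).prod) y =
      ((u.map (adjSwap n)).prod) ((adjSwap n t) (((v.map (adjSwap n)).prod) y)) := by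
  simp [List.map_append, List.prod_append, Equiv.Perm.mul_apply]

lemma descent {n : ℕ} (k : Fin n) (c : Equiv.Perm (Fin (n+1)))
    (hk : invLen (adjSwap n k * c) < invLen c) :
    (c⁻¹ k.succ) < (c⁻¹ k.castSucc) := by
  by_contra h
  push_neg at h
  have hne : c⁻¹ k.succ ≠ c⁻¹ k.castSucc := by
    intro he
    have := c⁻¹.injective he
    have : (k.succ : Fin (n+1)).val = k.castSucc.val := by rw [this]
    simp [Fin.val_succ, Fin.coe_castSucc] at this
  have hlt : c⁻¹ k.castSucc < c⁻¹ k.succ := lt_of_le_of_ne h (fun he => hne he.symm)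
  have hsub : (Finset.univ.filter fun p : Fin (n+1) × Fin (n+1) => p.1 < p.2 ∧ c p.2 < c p.1) ⊆
      (Finset.univ.filter fun p : Fin (n+1) × Fin (n+1) =>
        p.1 < p.2 ∧ (adjSwap n k * c) p.2 < (adjSwap n k * c) p.1) := by
    intro p hp
    simp only [Finset.mem_filter, Finset.mem_univ, true_and] at hp ⊢
    obtain ⟨h1, h2⟩ := hp
    refine ⟨h1, ?_⟩
    simp only [Equiv.Perm.mul_apply]
    have hne2 : ¬ ((c p.2).val = k.val ∧ (c p.1).val = k.val + 1) := by
      rintro ⟨ha, hb⟩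
      have h2a : c p.2 = k.castSucc := Fin.ext (by simpa using ha)
      have h2b : c p.1 = k.succ := Fin.ext (by simpa using hb)
      have e1 : p.2 = c⁻¹ k.castSucc := by rw [← h2a]; simp
      have e2 : p.1 = c⁻¹ k.succ := by rw [← h2b]; simp
      rw [e1, e2] at h1
      exact absurd h1 (not_lt.mpr (le_of_lt hlt))
    rw [Fin.lt_def] at h2 ⊢
    rw [adjSwap_val, adjSwap_val]
    split_ifs <;> omega
  have := Finset.card_le_card hsub
  unfold invLen at hk
  omega

lemma exclOne {n : ℕ} (k : Fin n) (l₁ l₂ : List (Fin n))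
    (hnd : (l₁ ++ k :: l₂).Nodup)
    (c : Equiv.Perm (Fin (n+1))) (hc : c = (((l₁ ++ k :: l₂)).map (adjSwap n)).prod)
    (hinit : (c⁻¹ k.succ) < (c⁻¹ k.castSucc))
    (p : Fin n) (hk1 : 0 < k.val) (hpval : p.val = k.val - 1) (hp : p ∈ l₁) : False := by
  have hkn := k.isLt
  have hKval : (k.castSucc : Fin (n+1)).val = k.val := rfl
  have hK1val : (k.succ : Fin (n+1)).val = k.val + 1 := rfl
  have hd : List.Disjoint l₁ (k :: l₂) := List.disjoint_of_nodup_append hnd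
  have hnd1 : l₁.Nodup := hnd.of_append_left
  have hnd2 : (k :: l₂).Nodup := hnd.of_append_right
  have hkl₁ : k ∉ l₁ := fun h => hd h (List.mem_cons_self)
  have hkl₂ : k ∉ l₂ := (List.nodup_cons.mp hnd2).1
  have hnd2' : l₂.Nodup := (List.nodup_cons.mp hnd2).2
  obtain ⟨A, hA⟩ : ∃ A', A' = ((l₁.map (adjSwap n)).prod) := ⟨_, rfl⟩
  obtain ⟨B, hB⟩ : ∃ B', B' = ((l₂.map (adjSwap n)).prod) := ⟨_, rfl⟩
  have happ : ∀ y, c y = A ((adjSwap n k) (B y)) := fun y => by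
    rw [hc, hA, hB]; exact prod_split l₁ l₂ k y
  have hBcut : ∀ y : Fin (n+1), (B y).val ≤ k.val ↔ y.val ≤ k.val :=
    fun y => by rw [hB]; exact prodCut l₂ k (fun t ht he => hkl₂ (he ▸ ht)) y
  have hAcutK : ∀ z : Fin (n+1), (A z).val ≤ k.val ↔ z.val ≤ k.val :=
    fun z => by rw [hA]; exact prodCut l₁ k (fun t ht he => hkl₁ (he ▸ ht)) z
  obtain ⟨y0, z0, hy0, hz0, hzy⟩ : ∃ y0 z0 : Fin (n+1),
      c y0 = k.castSucc ∧ c z0 = k.succ ∧ z0.val < y0.val :=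
    ⟨c⁻¹ k.castSucc, c⁻¹ k.succ, Equiv.apply_symm_apply _ _, Equiv.apply_symm_apply _ _, hinit⟩
  have hy0v : (A ((adjSwap n k) (B y0))).val = k.val := by
    rw [← happ, hy0]; exact hKval
  have hz0v : (A ((adjSwap n k) (B z0))).val = k.val + 1 := by
    rw [← happ, hz0]; exact hK1val
  have hpl₂ : p ∉ l₂ := fun h2 => hd hp (List.mem_cons_of_mem _ h2)
  have hBfixK : B (k.castSucc) = k.castSucc := by
    rw [hB]
    apply prodFix
    intro t ht
    have h1' : t.val ≠ k.val := fun he => hkl₂ ((Fin.ext he : t = k) ▸ ht)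
    have h2' : t.val ≠ p.val := fun he => hpl₂ ((Fin.ext he : t = p) ▸ ht)
    rw [hKval]; omega
  obtain ⟨m₁, m₂, rfl⟩ := List.append_of_mem hp
  have hd1 : List.Disjoint m₁ (p :: m₂) := List.disjoint_of_nodup_append hnd1
  have hpm₁ : p ∉ m₁ := fun h => hd1 h (List.mem_cons_self)
  have hpm₂ : p ∉ m₂ := (List.nodup_cons.mp hnd1.of_append_right).1
  have hkm₂ : k ∉ m₂ := fun h => hkl₁ (List.mem_append_right _ (List.mem_cons_of_mem _ h))
  have hAsplit : ∀ z, A z = ((m₁.map (adjSwap n)).prod) ((adjSwap n p)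
      (((m₂.map (adjSwap n)).prod) z)) := fun z => by rw [hA]; exact prod_split m₁ m₂ p z
  -- y0 ≤ k
  have hy0le : y0.val ≤ k.val := by
    by_contra hgt
    push_neg at hgt
    have hBy0 : ¬ (B y0).val ≤ k.val := by rw [hBcut]; omega
    rcases eq_or_ne (B y0).val (k.val + 1) with hcase | hcase
    · have hw : ((adjSwap n k) (B y0)).val = k.val := by
        rw [adjSwap_val]; split_ifs <;> omega
      have hm₂w : ((m₂.map (adjSwap n)).prod) ((adjSwap n k) (B y0)) =
          (adjSwap n k) (B y0) := by
        apply prodFix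
        intro t ht
        have h1' : t.val ≠ k.val := fun he => hkm₂ ((Fin.ext he : t = k) ▸ ht)
        have h2' : t.val ≠ p.val := fun he => hpm₂ ((Fin.ext he : t = p) ▸ ht)
        rw [hw]; omega
      have hswp : ((adjSwap n p) ((adjSwap n k) (B y0))).val = p.val := by
        rw [adjSwap_val]; split_ifs <;> omega
      have hm₁cut : (((m₁.map (adjSwap n)).prod)
          ((adjSwap n p) ((adjSwap n k) (B y0)))).val ≤ p.val := by
        rw [prodCut m₁ p (fun t ht he => hpm₁ (he ▸ ht))]; omega
      rw [hAsplit, hm₂w] at hy0v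
      omega
    · have hfix : (adjSwap n k) (B y0) = B y0 := by
        apply Fin.val_injective
        rw [adjSwap_val]; split_ifs <;> omega
      rw [hfix] at hy0v
      have := (hAcutK (B y0)).not
      omega
  -- z0 < k, derive contradiction
  have hBz0le : (B z0).val ≤ k.val := (hBcut z0).mpr (by omega)
  have hBz0ne : (B z0).val ≠ k.val := by
    intro he
    have hBe : B z0 = B (k.castSucc) := by
      rw [hBfixK]
      exact Fin.val_injective (by omega)
    have := congrArg Fin.val (B.injective hBe)
    rw [hKval] at this
    omega
  have hfix : (adjSwap n k) (B z0) = B z0 := by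
    apply Fin.val_injective
    rw [adjSwap_val]; split_ifs <;> omega
  rw [hfix] at hz0v
  have := (hAcutK (B z0)).mpr (by omega)
  omega

lemma exclTwo {n : ℕ} (k : Fin n) (l₁ l₂ : List (Fin n))
    (hnd : (l₁ ++ k :: l₂).Nodup)
    (c : Equiv.Perm (Fin (n+1))) (hc : c = (((l₁ ++ k :: l₂)).map (adjSwap n)).prod)
    (hinit : (c⁻¹ k.succ) < (c⁻¹ k.castSucc))
    (q : Fin n) (hk2 : k.val + 2 ≤ n) (hqval : q.val = k.val + 1) (hq : q ∈ l₁) : False := by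
  have hkn := k.isLt
  have hKval : (k.castSucc : Fin (n+1)).val = k.val := rfl
  have hK1val : (k.succ : Fin (n+1)).val = k.val + 1 := rfl
  have hd : List.Disjoint l₁ (k :: l₂) := List.disjoint_of_nodup_append hnd
  have hnd1 : l₁.Nodup := hnd.of_append_left
  have hnd2 : (k :: l₂).Nodup := hnd.of_append_right
  have hkl₁ : k ∉ l₁ := fun h => hd h (List.mem_cons_self)
  have hkl₂ : k ∉ l₂ := (List.nodup_cons.mp hnd2).1
  have hnd2' : l₂.Nodup := (List.nodup_cons.mp hnd2).2
  obtain ⟨A, hA⟩ : ∃ A', A' = ((l₁.map (adjSwap n)).prod) := ⟨_, rfl⟩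
  obtain ⟨B, hB⟩ : ∃ B', B' = ((l₂.map (adjSwap n)).prod) := ⟨_, rfl⟩
  have happ : ∀ y, c y = A ((adjSwap n k) (B y)) := fun y => by
    rw [hc, hA, hB]; exact prod_split l₁ l₂ k y
  have hBcut : ∀ y : Fin (n+1), (B y).val ≤ k.val ↔ y.val ≤ k.val :=
    fun y => by rw [hB]; exact prodCut l₂ k (fun t ht he => hkl₂ (he ▸ ht)) y
  have hAcutK : ∀ z : Fin (n+1), (A z).val ≤ k.val ↔ z.val ≤ k.val :=
    fun z => by rw [hA]; exact prodCut l₁ k (fun t ht he => hkl₁ (he ▸ ht)) z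
  obtain ⟨y0, z0, hy0, hz0, hzy⟩ : ∃ y0 z0 : Fin (n+1),
      c y0 = k.castSucc ∧ c z0 = k.succ ∧ z0.val < y0.val :=
    ⟨c⁻¹ k.castSucc, c⁻¹ k.succ, Equiv.apply_symm_apply _ _, Equiv.apply_symm_apply _ _, hinit⟩
  have hy0v : (A ((adjSwap n k) (B y0))).val = k.val := by
    rw [← happ, hy0]; exact hKval
  have hz0v : (A ((adjSwap n k) (B z0))).val = k.val + 1 := by
    rw [← happ, hz0]; exact hK1val
  have hql₂ : q ∉ l₂ := fun h2 => hd hq (List.mem_cons_of_mem _ h2)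
  have hBfixK1 : B (k.succ) = k.succ := by
    rw [hB]
    apply prodFix
    intro t ht
    have h1' : t.val ≠ k.val := fun he => hkl₂ ((Fin.ext he : t = k) ▸ ht)
    have h2' : t.val ≠ q.val := fun he => hql₂ ((Fin.ext he : t = q) ▸ ht)
    rw [hK1val]; omega
  obtain ⟨m₁, m₂, rfl⟩ := List.append_of_mem hq
  have hd1 : List.Disjoint m₁ (q :: m₂) := List.disjoint_of_nodup_append hnd1
  have hqm₁ : q ∉ m₁ := fun h => hd1 h (List.mem_cons_self)
  have hqm₂ : q ∉ m₂ := (List.nodup_cons.mp hnd1.of_append_right).1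
  have hkm₂ : k ∉ m₂ := fun h => hkl₁ (List.mem_append_right _ (List.mem_cons_of_mem _ h))
  have hAsplit : ∀ z, A z = ((m₁.map (adjSwap n)).prod) ((adjSwap n q)
      (((m₂.map (adjSwap n)).prod) z)) := fun z => by rw [hA]; exact prod_split m₁ m₂ q z
  -- z0 ≥ k+1
  have hz0ge : k.val + 1 ≤ z0.val := by
    by_contra hlt
    push_neg at hlt
    have hBz0 : (B z0).val ≤ k.val := (hBcut z0).mpr (by omega)
    rcases eq_or_ne (B z0).val k.val with hcase | hcase
    · have hw : ((adjSwap n k) (B z0)).val = k.val + 1 := by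
        rw [adjSwap_val]; split_ifs <;> omega
      have hm₂w : ((m₂.map (adjSwap n)).prod) ((adjSwap n k) (B z0)) =
          (adjSwap n k) (B z0) := by
        apply prodFix
        intro t ht
        have h1' : t.val ≠ k.val := fun he => hkm₂ ((Fin.ext he : t = k) ▸ ht)
        have h2' : t.val ≠ q.val := fun he => hqm₂ ((Fin.ext he : t = q) ▸ ht)
        rw [hw]; omega
      have hswq : ((adjSwap n q) ((adjSwap n k) (B z0))).val = q.val + 1 := by
        rw [adjSwap_val]; split_ifs <;> omega
      have hm₁cut : ¬ (((m₁.map (adjSwap n)).prod)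
          ((adjSwap n q) ((adjSwap n k) (B z0)))).val ≤ q.val := by
        rw [prodCut m₁ q (fun t ht he => hqm₁ (he ▸ ht))]; omega
      rw [hAsplit, hm₂w] at hz0v
      rw [hqval] at hm₁cut
      omega
    · have hfix : (adjSwap n k) (B z0) = B z0 := by
        apply Fin.val_injective
        rw [adjSwap_val]; split_ifs <;> omega
      rw [hfix] at hz0v
      have := (hAcutK (B z0)).mpr (by omega)
      omega
  -- y0 > k+1 contradiction
  have hBy0gt : ¬ (B y0).val ≤ k.val := by rw [hBcut]; omega
  have hBy0ne : (B y0).val ≠ k.val + 1 := by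
    intro he
    have hBe : B y0 = B (k.succ) := by
      rw [hBfixK1]
      exact Fin.val_injective (by omega)
    have := congrArg Fin.val (B.injective hBe)
    rw [hK1val] at this
    omega
  have hfix : (adjSwap n k) (B y0) = B y0 := by
    apply Fin.val_injective
    rw [adjSwap_val]; split_ifs <;> omega
  rw [hfix] at hy0v
  have := (hAcutK (B y0)).not
  omega

lemma partA {n : ℕ} (k : Fin n) (l : List (Fin n)) (hnd : l.Nodup) (hall : ∀ i, i ∈ l)
    (c : Equiv.Perm (Fin (n+1))) (hc : c = (l.map (adjSwap n)).prod)
    (hinit : (c⁻¹ k.succ) < (c⁻¹ k.castSucc))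
    (hk1 : 0 < k.val) : (c k.castSucc).val < k.val := by
  have hkn := k.isLt
  have hKval : (k.castSucc : Fin (n+1)).val = k.val := rfl
  have hK1val : (k.succ : Fin (n+1)).val = k.val + 1 := rfl
  obtain ⟨l₁, l₂, rfl⟩ := List.append_of_mem (hall k)
  have hd : List.Disjoint l₁ (k :: l₂) := List.disjoint_of_nodup_append hnd
  have hnd1 : l₁.Nodup := hnd.of_append_left
  have hnd2 : (k :: l₂).Nodup := hnd.of_append_right
  have hkl₁ : k ∉ l₁ := fun h => hd h (List.mem_cons_self)
  have hkl₂ : k ∉ l₂ := (List.nodup_cons.mp hnd2).1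
  have hnd2' : l₂.Nodup := (List.nodup_cons.mp hnd2).2
  obtain ⟨A, hA⟩ : ∃ A', A' = ((l₁.map (adjSwap n)).prod) := ⟨_, rfl⟩
  obtain ⟨B, hB⟩ : ∃ B', B' = ((l₂.map (adjSwap n)).prod) := ⟨_, rfl⟩
  have happ : ∀ y, c y = A ((adjSwap n k) (B y)) := fun y => by
    rw [hc, hA, hB]; exact prod_split l₁ l₂ k y
  have hBcut : ∀ y : Fin (n+1), (B y).val ≤ k.val ↔ y.val ≤ k.val :=
    fun y => by rw [hB]; exact prodCut l₂ k (fun t ht he => hkl₂ (he ▸ ht)) y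
  have hAcutK : ∀ z : Fin (n+1), (A z).val ≤ k.val ↔ z.val ≤ k.val :=
    fun z => by rw [hA]; exact prodCut l₁ k (fun t ht he => hkl₁ (he ▸ ht)) z
  have excl1 : ∀ p : Fin n, 0 < k.val → p.val = k.val - 1 → p ∈ l₁ → False :=
    fun p h1 h2 h3 => exclOne k l₁ l₂ hnd c hc hinit p h1 h2 h3
  have excl2 : ∀ q : Fin n, k.val + 2 ≤ n → q.val = k.val + 1 → q ∈ l₁ → False :=
    fun q h1 h2 h3 => exclTwo k l₁ l₂ hnd c hc hinit q h1 h2 h3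
  obtain ⟨p, hpval⟩ : ∃ p : Fin n, p.val = k.val - 1 := ⟨⟨k.val - 1, by omega⟩, rfl⟩
  have hpk : p ≠ k := by
    intro he
    have := congrArg Fin.val he
    omega
  have hpmem := hall p
  rw [List.mem_append, List.mem_cons] at hpmem
  rcases hpmem with hp | hp | hp
  · exact absurd hp (fun h => excl1 p hk1 hpval h)
  · exact absurd hp hpk
  have hpl₁ : p ∉ l₁ := fun h => hd h (List.mem_cons_of_mem _ hp)
  obtain ⟨m₁, m₂, rfl⟩ := List.append_of_mem hp
  have hd2 : List.Disjoint m₁ (p :: m₂) := List.disjoint_of_nodup_append hnd2'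
  have hpm₁ : p ∉ m₁ := fun h => hd2 h (List.mem_cons_self)
  have hpm₂ : p ∉ m₂ := (List.nodup_cons.mp hnd2'.of_append_right).1
  have hkm₂ : k ∉ m₂ := fun h => hkl₂ (List.mem_append_right _ (List.mem_cons_of_mem _ h))
  have hBsplit : ∀ z, B z = ((m₁.map (adjSwap n)).prod) ((adjSwap n p)
      (((m₂.map (adjSwap n)).prod) z)) := fun z => by rw [hB]; exact prod_split m₁ m₂ p z
  have hm₂K : ((m₂.map (adjSwap n)).prod) (k.castSucc) = k.castSucc := by
    apply prodFix
    intro t ht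
    have h1' : t.val ≠ k.val := fun he => hkm₂ ((Fin.ext he : t = k) ▸ ht)
    have h2' : t.val ≠ p.val := fun he => hpm₂ ((Fin.ext he : t = p) ▸ ht)
    rw [hKval]; omega
  have hswp : ((adjSwap n p) (k.castSucc)).val = p.val := by
    rw [adjSwap_val, hKval]; split_ifs <;> omega
  have hm₁cut : (((m₁.map (adjSwap n)).prod) ((adjSwap n p) (k.castSucc))).val ≤ p.val := by
    rw [prodCut m₁ p (fun t ht he => hpm₁ (he ▸ ht))]; omega
  have hBK : (B (k.castSucc)).val ≤ k.val - 1 := by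
    rw [hBsplit, hm₂K]; omega
  have hfix : (adjSwap n k) (B (k.castSucc)) = B (k.castSucc) := by
    apply Fin.val_injective
    rw [adjSwap_val]; split_ifs <;> omega
  have hAcutP : (A (B (k.castSucc))).val ≤ p.val := by
    rw [hA, prodCut l₁ p (fun t ht he => hpl₁ (he ▸ ht))]; omega
  rw [happ, hfix]
  omega

lemma partB {n : ℕ} (k : Fin n) (l : List (Fin n)) (hnd : l.Nodup) (hall : ∀ i, i ∈ l)
    (c : Equiv.Perm (Fin (n+1))) (hc : c = (l.map (adjSwap n)).prod)
    (hinit : (c⁻¹ k.succ) < (c⁻¹ k.castSucc))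
    (hk2 : k.val + 2 ≤ n) : k.val + 1 < (c k.succ).val := by
  have hkn := k.isLt
  have hKval : (k.castSucc : Fin (n+1)).val = k.val := rfl
  have hK1val : (k.succ : Fin (n+1)).val = k.val + 1 := rfl
  obtain ⟨l₁, l₂, rfl⟩ := List.append_of_mem (hall k)
  have hd : List.Disjoint l₁ (k :: l₂) := List.disjoint_of_nodup_append hnd
  have hnd1 : l₁.Nodup := hnd.of_append_left
  have hnd2 : (k :: l₂).Nodup := hnd.of_append_right
  have hkl₁ : k ∉ l₁ := fun h => hd h (List.mem_cons_self)
  have hkl₂ : k ∉ l₂ := (List.nodup_cons.mp hnd2).1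
  have hnd2' : l₂.Nodup := (List.nodup_cons.mp hnd2).2
  obtain ⟨A, hA⟩ : ∃ A', A' = ((l₁.map (adjSwap n)).prod) := ⟨_, rfl⟩
  obtain ⟨B, hB⟩ : ∃ B', B' = ((l₂.map (adjSwap n)).prod) := ⟨_, rfl⟩
  have happ : ∀ y, c y = A ((adjSwap n k) (B y)) := fun y => by
    rw [hc, hA, hB]; exact prod_split l₁ l₂ k y
  have hBcut : ∀ y : Fin (n+1), (B y).val ≤ k.val ↔ y.val ≤ k.val :=
    fun y => by rw [hB]; exact prodCut l₂ k (fun t ht he => hkl₂ (he ▸ ht)) y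
  have hAcutK : ∀ z : Fin (n+1), (A z).val ≤ k.val ↔ z.val ≤ k.val :=
    fun z => by rw [hA]; exact prodCut l₁ k (fun t ht he => hkl₁ (he ▸ ht)) z
  have excl1 : ∀ p : Fin n, 0 < k.val → p.val = k.val - 1 → p ∈ l₁ → False :=
    fun p h1 h2 h3 => exclOne k l₁ l₂ hnd c hc hinit p h1 h2 h3
  have excl2 : ∀ q : Fin n, k.val + 2 ≤ n → q.val = k.val + 1 → q ∈ l₁ → False :=
    fun q h1 h2 h3 => exclTwo k l₁ l₂ hnd c hc hinit q h1 h2 h3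
  obtain ⟨q, hqval⟩ : ∃ q : Fin n, q.val = k.val + 1 := ⟨⟨k.val + 1, by omega⟩, rfl⟩
  have hqk : q ≠ k := by
    intro he
    have := congrArg Fin.val he
    omega
  have hqmem := hall q
  rw [List.mem_append, List.mem_cons] at hqmem
  rcases hqmem with hq | hq | hq
  · exact absurd hq (fun h => excl2 q hk2 hqval h)
  · exact absurd hq hqk
  have hql₁ : q ∉ l₁ := fun h => hd h (List.mem_cons_of_mem _ hq)
  obtain ⟨m₁, m₂, rfl⟩ := List.append_of_mem hq
  have hd2 : List.Disjoint m₁ (q :: m₂) := List.disjoint_of_nodup_append hnd2'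
  have hqm₁ : q ∉ m₁ := fun h => hd2 h (List.mem_cons_self)
  have hqm₂ : q ∉ m₂ := (List.nodup_cons.mp hnd2'.of_append_right).1
  have hkm₂ : k ∉ m₂ := fun h => hkl₂ (List.mem_append_right _ (List.mem_cons_of_mem _ h))
  have hBsplit : ∀ z, B z = ((m₁.map (adjSwap n)).prod) ((adjSwap n q)
      (((m₂.map (adjSwap n)).prod) z)) := fun z => by rw [hB]; exact prod_split m₁ m₂ q z
  have hm₂K1 : ((m₂.map (adjSwap n)).prod) (k.succ) = k.succ := by
    apply prodFix
    intro t ht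
    have h1' : t.val ≠ q.val := fun he => hqm₂ ((Fin.ext he : t = q) ▸ ht)
    have h2' : t.val ≠ k.val := fun he => hkm₂ ((Fin.ext he : t = k) ▸ ht)
    rw [hK1val]; omega
  have hswq : ((adjSwap n q) (k.succ)).val = q.val + 1 := by
    rw [adjSwap_val, hK1val]; split_ifs <;> omega
  have hm₁cut : ¬ (((m₁.map (adjSwap n)).prod) ((adjSwap n q) (k.succ))).val ≤ q.val := by
    rw [prodCut m₁ q (fun t ht he => hqm₁ (he ▸ ht))]; omega
  have hBK1 : k.val + 2 ≤ (B (k.succ)).val := by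
    rw [hBsplit, hm₂K1]
    rw [hqval] at hm₁cut
    omega
  have hfix : (adjSwap n k) (B (k.succ)) = B (k.succ) := by
    apply Fin.val_injective
    rw [adjSwap_val]; split_ifs <;> omega
  have hAcutQ : ¬ (A (B (k.succ))).val ≤ q.val := by
    rw [hA, prodCut l₁ q (fun t ht he => hql₁ (he ▸ ht))]; omega
  rw [happ, hfix]
  rw [hqval] at hAcutQ
  omega

lemma partC {n : ℕ} (k : Fin n) (l : List (Fin n)) (hnd : l.Nodup) (hall : ∀ i, i ∈ l)
    (c : Equiv.Perm (Fin (n+1))) (hc : c = (l.map (adjSwap n)).prod)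
    (hinit : (c⁻¹ k.succ) < (c⁻¹ k.castSucc))
    (hk1 : 0 < k.val) (htop : k.val + 1 = n) : (c k.succ).val = k.val := by
  have hkn := k.isLt
  have hKval : (k.castSucc : Fin (n+1)).val = k.val := rfl
  have hK1val : (k.succ : Fin (n+1)).val = k.val + 1 := rfl
  obtain ⟨l₁, l₂, rfl⟩ := List.append_of_mem (hall k)
  have hd : List.Disjoint l₁ (k :: l₂) := List.disjoint_of_nodup_append hnd
  have hnd1 : l₁.Nodup := hnd.of_append_left
  have hnd2 : (k :: l₂).Nodup := hnd.of_append_right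
  have hkl₁ : k ∉ l₁ := fun h => hd h (List.mem_cons_self)
  have hkl₂ : k ∉ l₂ := (List.nodup_cons.mp hnd2).1
  have hnd2' : l₂.Nodup := (List.nodup_cons.mp hnd2).2
  obtain ⟨A, hA⟩ : ∃ A', A' = ((l₁.map (adjSwap n)).prod) := ⟨_, rfl⟩
  obtain ⟨B, hB⟩ : ∃ B', B' = ((l₂.map (adjSwap n)).prod) := ⟨_, rfl⟩
  have happ : ∀ y, c y = A ((adjSwap n k) (B y)) := fun y => by
    rw [hc, hA, hB]; exact prod_split l₁ l₂ k y
  have hBcut : ∀ y : Fin (n+1), (B y).val ≤ k.val ↔ y.val ≤ k.val :=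
    fun y => by rw [hB]; exact prodCut l₂ k (fun t ht he => hkl₂ (he ▸ ht)) y
  have hAcutK : ∀ z : Fin (n+1), (A z).val ≤ k.val ↔ z.val ≤ k.val :=
    fun z => by rw [hA]; exact prodCut l₁ k (fun t ht he => hkl₁ (he ▸ ht)) z
  have excl1 : ∀ p : Fin n, 0 < k.val → p.val = k.val - 1 → p ∈ l₁ → False :=
    fun p h1 h2 h3 => exclOne k l₁ l₂ hnd c hc hinit p h1 h2 h3
  have excl2 : ∀ q : Fin n, k.val + 2 ≤ n → q.val = k.val + 1 → q ∈ l₁ → False :=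
    fun q h1 h2 h3 => exclTwo k l₁ l₂ hnd c hc hinit q h1 h2 h3
  obtain ⟨p, hpval⟩ : ∃ p : Fin n, p.val = k.val - 1 := ⟨⟨k.val - 1, by omega⟩, rfl⟩
  have hpk : p ≠ k := by
    intro he
    have := congrArg Fin.val he
    omega
  have hpmem := hall p
  rw [List.mem_append, List.mem_cons] at hpmem
  rcases hpmem with hp | hp | hp
  · exact absurd hp (fun h => excl1 p hk1 hpval h)
  · exact absurd hp hpk
  have hpl₁ : p ∉ l₁ := fun h => hd h (List.mem_cons_of_mem _ hp)
  have hBK1 : B (k.succ) = k.succ := by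
    rw [hB]
    apply prodFix
    intro t ht
    have h1' : t.val ≠ k.val := fun he => hkl₂ ((Fin.ext he : t = k) ▸ ht)
    have := t.isLt
    rw [hK1val]; omega
  have hsw : ((adjSwap n k) (k.succ)).val = k.val := by
    rw [adjSwap_val, hK1val]; split_ifs <;> omega
  have hAfix : A ((adjSwap n k) (k.succ)) = (adjSwap n k) (k.succ) := by
    rw [hA]
    apply prodFix
    intro t ht
    have h1' : t.val ≠ k.val := fun he => hkl₁ ((Fin.ext he : t = k) ▸ ht)
    have h2' : t.val ≠ p.val := fun he => hpl₁ ((Fin.ext he : t = p) ▸ ht)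
    rw [hsw]; omega
  rw [happ, hBK1, hAfix]
  exact hsw

lemma partD {n : ℕ} (k : Fin n) (l : List (Fin n)) (hnd : l.Nodup) (hall : ∀ i, i ∈ l)
    (c : Equiv.Perm (Fin (n+1))) (hc : c = (l.map (adjSwap n)).prod)
    (hinit : (c⁻¹ k.succ) < (c⁻¹ k.castSucc))
    (h0 : k.val = 0) (hn2 : 2 ≤ n) : (c k.castSucc).val = 1 := by
  have hkn := k.isLt
  have hKval : (k.castSucc : Fin (n+1)).val = k.val := rfl
  have hK1val : (k.succ : Fin (n+1)).val = k.val + 1 := rfl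
  obtain ⟨l₁, l₂, rfl⟩ := List.append_of_mem (hall k)
  have hd : List.Disjoint l₁ (k :: l₂) := List.disjoint_of_nodup_append hnd
  have hnd1 : l₁.Nodup := hnd.of_append_left
  have hnd2 : (k :: l₂).Nodup := hnd.of_append_right
  have hkl₁ : k ∉ l₁ := fun h => hd h (List.mem_cons_self)
  have hkl₂ : k ∉ l₂ := (List.nodup_cons.mp hnd2).1
  have hnd2' : l₂.Nodup := (List.nodup_cons.mp hnd2).2
  obtain ⟨A, hA⟩ : ∃ A', A' = ((l₁.map (adjSwap n)).prod) := ⟨_, rfl⟩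
  obtain ⟨B, hB⟩ : ∃ B', B' = ((l₂.map (adjSwap n)).prod) := ⟨_, rfl⟩
  have happ : ∀ y, c y = A ((adjSwap n k) (B y)) := fun y => by
    rw [hc, hA, hB]; exact prod_split l₁ l₂ k y
  have hBcut : ∀ y : Fin (n+1), (B y).val ≤ k.val ↔ y.val ≤ k.val :=
    fun y => by rw [hB]; exact prodCut l₂ k (fun t ht he => hkl₂ (he ▸ ht)) y
  have hAcutK : ∀ z : Fin (n+1), (A z).val ≤ k.val ↔ z.val ≤ k.val :=
    fun z => by rw [hA]; exact prodCut l₁ k (fun t ht he => hkl₁ (he ▸ ht)) z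
  have excl1 : ∀ p : Fin n, 0 < k.val → p.val = k.val - 1 → p ∈ l₁ → False :=
    fun p h1 h2 h3 => exclOne k l₁ l₂ hnd c hc hinit p h1 h2 h3
  have excl2 : ∀ q : Fin n, k.val + 2 ≤ n → q.val = k.val + 1 → q ∈ l₁ → False :=
    fun q h1 h2 h3 => exclTwo k l₁ l₂ hnd c hc hinit q h1 h2 h3
  obtain ⟨q, hqval⟩ : ∃ q : Fin n, q.val = k.val + 1 := ⟨⟨k.val + 1, by omega⟩, rfl⟩
  have hqk : q ≠ k := by
    intro he
    have := congrArg Fin.val he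
    omega
  have hqmem := hall q
  rw [List.mem_append, List.mem_cons] at hqmem
  rcases hqmem with hq | hq | hq
  · exact absurd hq (fun h => excl2 q (by omega) hqval h)
  · exact absurd hq hqk
  have hql₁ : q ∉ l₁ := fun h => hd h (List.mem_cons_of_mem _ hq)
  have hBK : B (k.castSucc) = k.castSucc := by
    rw [hB]
    apply prodFix
    intro t ht
    have h1' : t.val ≠ k.val := fun he => hkl₂ ((Fin.ext he : t = k) ▸ ht)
    rw [hKval]; omega
  have hsw : ((adjSwap n k) (k.castSucc)).val = k.val + 1 := by
    rw [adjSwap_val, hKval]; split_ifs <;> omega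
  have hAfix : A ((adjSwap n k) (k.castSucc)) = (adjSwap n k) (k.castSucc) := by
    rw [hA]
    apply prodFix
    intro t ht
    have h1' : t.val ≠ k.val := fun he => hkl₁ ((Fin.ext he : t = k) ▸ ht)
    have h2' : t.val ≠ q.val := fun he => hql₁ ((Fin.ext he : t = q) ▸ ht)
    rw [hsw]; omega
  rw [happ, hBK, hAfix, hsw]
  omega

lemma key {n : ℕ} (k : Fin n) (l : List (Fin n)) (hnd : l.Nodup) (hall : ∀ i, i ∈ l)
    (c : Equiv.Perm (Fin (n+1))) (hc : c = (l.map (adjSwap n)).prod)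
    (hinit : (c⁻¹ k.succ) < (c⁻¹ k.castSucc)) :
    (0 < k.val → (c k.castSucc).val < k.val) ∧
    (k.val + 2 ≤ n → k.val + 1 < (c k.succ).val) ∧
    (0 < k.val → k.val + 1 = n → (c k.succ).val = k.val) ∧
    (k.val = 0 → 2 ≤ n → (c k.castSucc).val = 1) :=
  ⟨fun h => partA k l hnd hall c hc hinit h,
   fun h => partB k l hnd hall c hc hinit h,
   fun h1 h2 => partC k l hnd hall c hc hinit h1 h2,
   fun h1 h2 => partD k l hnd hall c hc hinit h1 h2⟩

lemma nfp {n : ℕ} (l : List (Fin n)) (hnd : l.Nodup) (hall : ∀ i, i ∈ l)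
    (c : Equiv.Perm (Fin (n+1))) (hc : c = (l.map (adjSwap n)).prod)
    (x : Fin (n+1)) (hx0 : 0 < x.val) (hxn : x.val < n) : c x ≠ x := by
  obtain ⟨p, hpval⟩ : ∃ p : Fin n, p.val = x.val - 1 := ⟨⟨x.val - 1, by omega⟩, rfl⟩
  obtain ⟨q, hqval⟩ : ∃ q : Fin n, q.val = x.val := ⟨⟨x.val, hxn⟩, rfl⟩
  have hpq : p ≠ q := by
    intro he; have := congrArg Fin.val he; omega
  obtain ⟨u, v, rfl⟩ := List.append_of_mem (hall p)
  have hd : List.Disjoint u (p :: v) := List.disjoint_of_nodup_append hnd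
  have hpu : p ∉ u := fun h => hd h (List.mem_cons_self)
  have hpv : p ∉ v := (List.nodup_cons.mp hnd.of_append_right).1
  have hndu : u.Nodup := hnd.of_append_left
  have hndv : v.Nodup := (List.nodup_cons.mp hnd.of_append_right).2
  have happ : ∀ y, c y = ((u.map (adjSwap n)).prod)
      ((adjSwap n p) (((v.map (adjSwap n)).prod) y)) := fun y => by
    rw [hc]; exact prod_split u v p y
  have hqmem := hall q
  rw [List.mem_append, List.mem_cons] at hqmem
  intro hfixed
  have hcx : (c x).val = x.val := congrArg Fin.val hfixed
  rw [happ] at hcx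
  rcases hqmem with hq | hq | hq
  · -- q ∈ u : c x ≤ x - 1
    obtain ⟨u₁, u₂, rfl⟩ := List.append_of_mem hq
    have hd1 : List.Disjoint u₁ (q :: u₂) := List.disjoint_of_nodup_append hndu
    have hqu₁ : q ∉ u₁ := fun h => hd1 h (List.mem_cons_self)
    have hqu₂ : q ∉ u₂ := (List.nodup_cons.mp hndu.of_append_right).1
    have hpu₁ : p ∉ u₁ := fun h => hpu (List.mem_append_left _ h)
    have hpu₂ : p ∉ u₂ := fun h => hpu (List.mem_append_right _ (List.mem_cons_of_mem _ h))
    have hqv : q ∉ v := fun h => hd hq (List.mem_cons_of_mem _ h)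
    have hVx : ((v.map (adjSwap n)).prod) x = x := by
      apply prodFix
      intro t ht
      have h1' : t.val ≠ q.val := fun he => hqv ((Fin.ext he : t = q) ▸ ht)
      have h2' : t.val ≠ p.val := fun he => hpv ((Fin.ext he : t = p) ▸ ht)
      omega
    have hspx : ((adjSwap n p) x).val = p.val := by
      rw [adjSwap_val]; split_ifs <;> omega
    have hsplit : ∀ z, ((((u₁ ++ q :: u₂)).map (adjSwap n)).prod) z =
        ((u₁.map (adjSwap n)).prod) ((adjSwap n q) (((u₂.map (adjSwap n)).prod) z)) :=
      fun z => prod_split u₁ u₂ q z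
    have hU₂ : (((u₂.map (adjSwap n)).prod) ((adjSwap n p) x)).val ≤ p.val := by
      rw [prodCut u₂ p (fun t ht he => hpu₂ (he ▸ ht))]; omega
    have hsq : (adjSwap n q) (((u₂.map (adjSwap n)).prod) ((adjSwap n p) x)) =
        ((u₂.map (adjSwap n)).prod) ((adjSwap n p) x) := by
      apply Fin.val_injective
      rw [adjSwap_val]; split_ifs <;> omega
    have hU₁ : (((u₁.map (adjSwap n)).prod)
        (((u₂.map (adjSwap n)).prod) ((adjSwap n p) x))).val ≤ p.val := by
      rw [prodCut u₁ p (fun t ht he => hpu₁ (he ▸ ht))]; omega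
    rw [hVx, hsplit, hsq] at hcx
    omega
  · exact hpq (hq.symm)
  · -- q ∈ v : c x ≥ x + 1
    have hqu : q ∉ u := fun h => hd h (List.mem_cons_of_mem _ hq)
    obtain ⟨v₁, v₂, rfl⟩ := List.append_of_mem hq
    have hd1 : List.Disjoint v₁ (q :: v₂) := List.disjoint_of_nodup_append hndv
    have hqv₁ : q ∉ v₁ := fun h => hd1 h (List.mem_cons_self)
    have hqv₂ : q ∉ v₂ := (List.nodup_cons.mp hndv.of_append_right).1
    have hpv₁ : p ∉ v₁ := fun h => hpv (List.mem_append_left _ h)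
    have hpv₂ : p ∉ v₂ := fun h => hpv (List.mem_append_right _ (List.mem_cons_of_mem _ h))
    have hsplit : ∀ z, ((((v₁ ++ q :: v₂)).map (adjSwap n)).prod) z =
        ((v₁.map (adjSwap n)).prod) ((adjSwap n q) (((v₂.map (adjSwap n)).prod) z)) :=
      fun z => prod_split v₁ v₂ q z
    have hV₂x : ((v₂.map (adjSwap n)).prod) x = x := by
      apply prodFix
      intro t ht
      have h1' : t.val ≠ q.val := fun he => hqv₂ ((Fin.ext he : t = q) ▸ ht)
      have h2' : t.val ≠ p.val := fun he => hpv₂ ((Fin.ext he : t = p) ▸ ht)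
      omega
    have hsqx : ((adjSwap n q) x).val = x.val + 1 := by
      rw [adjSwap_val]; split_ifs <;> omega
    have hV₁ : ¬ (((v₁.map (adjSwap n)).prod) ((adjSwap n q) x)).val ≤ q.val := by
      rw [prodCut v₁ q (fun t ht he => hqv₁ (he ▸ ht))]; omega
    have hsp : (adjSwap n p) (((v₁.map (adjSwap n)).prod) ((adjSwap n q) x)) =
        ((v₁.map (adjSwap n)).prod) ((adjSwap n q) x) := by
      apply Fin.val_injective
      rw [adjSwap_val]; split_ifs <;> omega
    have hU : ¬ (((u.map (adjSwap n)).prod)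
        (((v₁.map (adjSwap n)).prod) ((adjSwap n q) x))).val ≤ q.val := by
      rw [prodCut u q (fun t ht he => hqu (he ▸ ht))]; omega
    rw [hsplit, hV₂x, hsp] at hcx
    omega

/-- Relation between `c`-charmed and `c'`-charmed roots for `c' = s_k c s_k`,
`s_k` initial in `c`. -/
theorem stmt3 (n : ℕ) (c : Equiv.Perm (Fin (n+1))) (hc : IsStdCoxeter n c)
    (k : Fin n) (hk : invLen (adjSwap n k * c) < invLen c) :
    ∀ i j : Fin (n+1), 0 < i → i < j → j < Fin.last n →
      (charmedRel n c i j ↔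
        ((charmedRel n (adjSwap n k * c * adjSwap n k) i j ∧
            Even (({i, j} ∩ {k.castSucc, k.succ} : Finset (Fin (n+1))).card)) ∨
         (¬ charmedRel n (adjSwap n k * c * adjSwap n k) i j ∧
            Odd (({i, j} ∩ {k.castSucc, k.succ} : Finset (Fin (n+1))).card)))) := by
  obtain ⟨l, hnd, hall, hcl⟩ := hc
  have hinit := descent k c hk
  obtain ⟨hA, hB, hC, hD⟩ := key k l hnd hall c hcl hinit
  have hkn := k.isLt
  obtain ⟨w, hw⟩ : ∃ w', w' = adjSwap n k * c * adjSwap n k := ⟨_, rfl⟩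
  have hwapp : ∀ x, w x = adjSwap n k (c (adjSwap n k x)) := fun x => by
    rw [hw]; rfl
  have hKval : (k.castSucc : Fin (n+1)).val = k.val := rfl
  have hK1val : (k.succ : Fin (n+1)).val = k.val + 1 := rfl
  have hskK : adjSwap n k (k.castSucc) = k.succ := by
    apply Fin.val_injective
    rw [adjSwap_val]; split_ifs <;> omega
  have hskK1 : adjSwap n k (k.succ) = k.castSucc := by
    apply Fin.val_injective
    rw [adjSwap_val]; split_ifs <;> omega
  have sideK : 0 < k.val →
      (c k.castSucc).val < k.val ∧ k.val < (w k.castSucc).val := by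
    intro hk1
    refine ⟨hA hk1, ?_⟩
    rw [hwapp, hskK]
    by_cases htop : k.val + 1 = n
    · have := hC hk1 htop
      rw [adjSwap_val]; split_ifs <;> omega
    · have := hB (by omega)
      rw [adjSwap_val]; split_ifs <;> omega
  have sideK1 : k.val + 2 ≤ n →
      k.val + 1 < (c k.succ).val ∧ (w k.succ).val < k.val + 1 := by
    intro hk2
    refine ⟨hB hk2, ?_⟩
    rw [hwapp, hskK1]
    rcases Nat.eq_zero_or_pos k.val with h0 | h1
    · have := hD h0 (by omega)
      rw [adjSwap_val]; split_ifs <;> omega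
    · have := hA h1
      rw [adjSwap_val]; split_ifs <;> omega
  have sideO : ∀ x : Fin (n+1), 0 < x.val → x.val < n →
      x.val ≠ k.val → x.val ≠ k.val + 1 →
      ((x.val < (c x).val ↔ x.val < (w x).val) ∧
       ((c x).val < x.val ↔ (w x).val < x.val) ∧
       (c x).val ≠ x.val) := by
    intro x h0 hn' hxk hxk1
    have hne : c x ≠ x := nfp l hnd hall c hcl x h0 hn'
    have hnev : (c x).val ≠ x.val := fun he => hne (Fin.val_injective he)
    have hfixx : adjSwap n k x = x := by
      apply Fin.val_injective
      rw [adjSwap_val]; split_ifs <;> omega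
    have hwx : (w x).val = ((adjSwap n k) (c x)).val := by rw [hwapp, hfixx]
    rw [hwx, adjSwap_val]
    split_ifs <;> exact ⟨by omega, by omega, hnev⟩
  clear hA hB hC hD
  intro i j hi hij hj
  rw [← hw]
  have hi' : 0 < i.val := hi
  have hij' : i.val < j.val := hij
  have hj' : j.val < n := hj
  have hji : 0 < j.val := by omega
  have hin : i.val < n := by omega
  have ev2 : Even 2 := ⟨1, rfl⟩
  have nod2 : ¬ Odd 2 := by decide
  have od1 : Odd 1 := ⟨0, rfl⟩
  have nev1 : ¬ Even 1 := by decide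
  have ev0 : Even 0 := Even.zero
  have nod0 : ¬ Odd 0 := by decide
  have hKK1ne : (k.castSucc : Fin (n+1)) ≠ k.succ := by
    intro he; have := congrArg Fin.val he; omega
  by_cases hik : i.val = k.val
  · have hiK : i = k.castSucc := Fin.val_injective (by omega)
    subst hiK
    have hfi := sideK (by omega)
    by_cases hjk1 : j.val = k.val + 1
    · have hjK1 : j = k.succ := Fin.val_injective (by omega)
      subst hjK1
      have hgj := sideK1 (by omega)
      have hcard : ({k.castSucc, k.succ} ∩ {k.castSucc, k.succ} :
          Finset (Fin (n+1))).card = 2 := by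
        rw [Finset.inter_self]
        rw [Finset.card_insert_of_notMem (by simp [hKK1ne]), Finset.card_singleton]
      rw [hcard]
      simp only [charmedRel, Fin.lt_def, nev1, od1, ev2, nod2, ev0, nod0,
        iff_true, iff_false, true_and, and_true, false_and, and_false, or_false, false_or,
        not_false_eq_true, not_or]
      omega
    · have hjk : j.val ≠ k.val := by omega
      obtain ⟨g1, g2, g3⟩ := sideO j hji hj' hjk hjk1
      have hcard : ({k.castSucc, j} ∩ {k.castSucc, k.succ} :
          Finset (Fin (n+1))).card = 1 := by
        have hjS : j ∉ ({k.castSucc, k.succ} : Finset (Fin (n+1))) := by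
          simp only [Finset.mem_insert, Finset.mem_singleton]
          push_neg
          constructor <;> (intro he; have := congrArg Fin.val he; omega)
        rw [show ({k.castSucc, j} : Finset (Fin (n+1))) = insert k.castSucc {j} from rfl,
          Finset.insert_inter_of_mem (Finset.mem_insert_self _ _),
          Finset.singleton_inter_of_notMem hjS]
        simp
      rw [hcard]
      simp only [charmedRel, Fin.lt_def, nev1, od1, ev2, nod2, ev0, nod0,
        iff_true, iff_false, true_and, and_true, false_and, and_false, or_false, false_or,
        not_false_eq_true, not_or]
      omega
  · by_cases hik1 : i.val = k.val + 1
    · have hiK1 : i = k.succ := Fin.val_injective (by omega)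
      subst hiK1
      have hfi := sideK1 (by omega)
      have hjk : j.val ≠ k.val := by omega
      have hjk1 : j.val ≠ k.val + 1 := by omega
      obtain ⟨g1, g2, g3⟩ := sideO j hji hj' hjk hjk1
      have hcard : ({k.succ, j} ∩ {k.castSucc, k.succ} :
          Finset (Fin (n+1))).card = 1 := by
        have hjS : j ∉ ({k.castSucc, k.succ} : Finset (Fin (n+1))) := by
          simp only [Finset.mem_insert, Finset.mem_singleton]
          push_neg
          constructor <;> (intro he; have := congrArg Fin.val he; omega)
        have hiS : (k.succ : Fin (n+1)) ∈ ({k.castSucc, k.succ} : Finset (Fin (n+1))) :=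
          Finset.mem_insert_of_mem (Finset.mem_singleton_self _)
        rw [show ({k.succ, j} : Finset (Fin (n+1))) = insert k.succ {j} from rfl,
          Finset.insert_inter_of_mem hiS,
          Finset.singleton_inter_of_notMem hjS]
        simp
      rw [hcard]
      simp only [charmedRel, Fin.lt_def, nev1, od1, ev2, nod2, ev0, nod0,
        iff_true, iff_false, true_and, and_true, false_and, and_false, or_false, false_or,
        not_false_eq_true, not_or]
      omega
    · by_cases hjk : j.val = k.val
      · have hjK : j = k.castSucc := Fin.val_injective (by omega)
        subst hjK
        have hgj := sideK (by omega)
        have hik1' : i.val ≠ k.val + 1 := by omega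
        obtain ⟨f1, f2, f3⟩ := sideO i hi' hin hik hik1'
        have hcard : ({i, k.castSucc} ∩ {k.castSucc, k.succ} :
            Finset (Fin (n+1))).card = 1 := by
          have hiS : i ∉ ({k.castSucc, k.succ} : Finset (Fin (n+1))) := by
            simp only [Finset.mem_insert, Finset.mem_singleton]
            push_neg
            constructor <;> (intro he; have := congrArg Fin.val he; omega)
          rw [show ({i, k.castSucc} : Finset (Fin (n+1))) = insert i {k.castSucc} from rfl,
            Finset.insert_inter_of_notMem hiS,
            Finset.singleton_inter_of_mem (Finset.mem_insert_self _ _)]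
          simp
        rw [hcard]
        simp only [charmedRel, Fin.lt_def, nev1, od1, ev2, nod2, ev0, nod0,
          iff_true, iff_false, true_and, and_true, false_and, and_false, or_false, false_or,
          not_false_eq_true, not_or]
        omega
      · by_cases hjk1 : j.val = k.val + 1
        · have hjK1 : j = k.succ := Fin.val_injective (by omega)
          subst hjK1
          have hgj := sideK1 (by omega)
          have hik1' : i.val ≠ k.val + 1 := by omega
          obtain ⟨f1, f2, f3⟩ := sideO i hi' hin hik hik1'
          have hcard : ({i, k.succ} ∩ {k.castSucc, k.succ} :
              Finset (Fin (n+1))).card = 1 := by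
            have hiS : i ∉ ({k.castSucc, k.succ} : Finset (Fin (n+1))) := by
              simp only [Finset.mem_insert, Finset.mem_singleton]
              push_neg
              constructor <;> (intro he; have := congrArg Fin.val he; omega)
            have hjS : (k.succ : Fin (n+1)) ∈ ({k.castSucc, k.succ} : Finset (Fin (n+1))) :=
              Finset.mem_insert_of_mem (Finset.mem_singleton_self _)
            rw [show ({i, k.succ} : Finset (Fin (n+1))) = insert i {k.succ} from rfl,
              Finset.insert_inter_of_notMem hiS,
              Finset.singleton_inter_of_mem hjS]
            simp
          rw [hcard]
          simp only [charmedRel, Fin.lt_def, nev1, od1, ev2, nod2, ev0, nod0,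
            iff_true, iff_false, true_and, and_true, false_and, and_false, or_false, false_or,
            not_false_eq_true, not_or]
          omega
        · obtain ⟨f1, f2, f3⟩ := sideO i hi' hin hik hik1
          obtain ⟨g1, g2, g3⟩ := sideO j hji hj' hjk hjk1
          have hcard : ({i, j} ∩ {k.castSucc, k.succ} :
              Finset (Fin (n+1))).card = 0 := by
            have hiS : i ∉ ({k.castSucc, k.succ} : Finset (Fin (n+1))) := by
              simp only [Finset.mem_insert, Finset.mem_singleton]
              push_neg
              constructor <;> (intro he; have := congrArg Fin.val he; omega)
            have hjS : j ∉ ({k.castSucc, k.succ} : Finset (Fin (n+1))) := by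
              simp only [Finset.mem_insert, Finset.mem_singleton]
              push_neg
              constructor <;> (intro he; have := congrArg Fin.val he; omega)
            rw [show ({i, j} : Finset (Fin (n+1))) = insert i {j} from rfl,
              Finset.insert_inter_of_notMem hiS,
              Finset.singleton_inter_of_notMem hjS]
            simp
          rw [hcard]
          simp only [charmedRel, Fin.lt_def, nev1, od1, ev2, nod2, ev0, nod0,
            iff_true, iff_false, true_and, and_true, false_and, and_false, or_false, false_or,
            not_false_eq_true, not_or]
          omega
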